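/- Let φ = α χ₁^# + χ₀^# be S_n-biinvariant with φ(e)=1 (χ₀^# the indicator of S_n, χ₁^# that of S_n τ_{1,n+1} S_n), and suppose φ satisfies φ̄ * φ = ⟨φ,φ⟩ φ with ⟨f,g⟩ = (1/(n+1)!) Σ_σ f(σ)g(σ). Then α is real and α(α−1)(α+1/n) = 0, so α ∈ {0, 1, −1/n}. -/

import Mathlib

open scoped Classical

/-- `S_n` embedded in `S_{n+1}` as the stabilizer of the last point `n+1`. -/
def Sn (n : ℕ) : Subgroup (Equiv.Perm (Fin (n + 1))) :=
  MulAction.stabilizer (Equiv.Perm (Fin (n + 1))) (Fin.last n)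

/-- The double coset `Sₙ σ Sₙ` in `S_{n+1}`. -/
def doset (n : ℕ) (σ : Equiv.Perm (Fin (n + 1))) : Set (Equiv.Perm (Fin (n + 1))) :=
  {x | ∃ h ∈ Sn n, ∃ h' ∈ Sn n, x = h * σ * h'}

/-- Convolution on `S_{n+1}` w.r.t. the normalized Haar measure. -/
noncomputable def conv (n : ℕ) (f g : Equiv.Perm (Fin (n + 1)) → ℂ) :
    Equiv.Perm (Fin (n + 1)) → ℂ :=
  fun x => (Nat.factorial (n + 1) : ℂ)⁻¹ * ∑ y : Equiv.Perm (Fin (n + 1)), f y * g (y⁻¹ * x)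

/-- Indicator `χ₁^#` of the double coset `Sₙ τ_{1,n+1} Sₙ`. -/
noncomputable def chi1 (n : ℕ) : Equiv.Perm (Fin (n + 1)) → ℂ :=
  fun x => if x ∈ doset n (Equiv.swap 0 (Fin.last n)) then 1 else 0

/-- Indicator `χ₀^#` of the subgroup `Sₙ`. -/
noncomputable def chi0 (n : ℕ) : Equiv.Perm (Fin (n + 1)) → ℂ :=
  fun x => if x ∈ Sn n then 1 else 0

/-- The candidate spherical function `φ = α χ₁^# + χ₀^#`. -/
noncomputable def phi (n : ℕ) (α : ℂ) : Equiv.Perm (Fin (n + 1)) → ℂ :=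
  fun x => α * chi1 n x + chi0 n x

open Equiv Finset

lemma mem_Sn_iff {n : ℕ} (x : Equiv.Perm (Fin (n+1))) :
    x ∈ Sn n ↔ x (Fin.last n) = Fin.last n := Iff.rfl

lemma card_fiber (m : ℕ) (a b : Fin (m+1)) :
    (Finset.univ.filter fun z : Equiv.Perm (Fin (m+1)) => z a = b).card = m.factorial := by
  have hconst : ∀ b' : Fin (m+1),
      (Finset.univ.filter fun z : Equiv.Perm (Fin (m+1)) => z a = b').card
        = (Finset.univ.filter fun z : Equiv.Perm (Fin (m+1)) => z a = b).card := by
    intro b'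
    apply Finset.card_nbij' (fun z => Equiv.swap b' b * z) (fun z => Equiv.swap b' b * z)
    · intro z hz
      simp only [Finset.mem_coe, Finset.mem_filter, Finset.mem_univ, true_and] at hz ⊢
      simp [Equiv.Perm.mul_apply, hz]
    · intro z hz
      simp only [Finset.mem_coe, Finset.mem_filter, Finset.mem_univ, true_and] at hz ⊢
      simp [Equiv.Perm.mul_apply, hz]
    · intro z _
      simp [← mul_assoc, Equiv.swap_mul_self]
    · intro z _
      simp [← mul_assoc, Equiv.swap_mul_self]
  have hsum : ∑ b' : Fin (m+1),
      (Finset.univ.filter fun z : Equiv.Perm (Fin (m+1)) => z a = b').card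
      = (m+1).factorial := by
    rw [← Finset.card_eq_sum_card_fiberwise (f := fun z : Equiv.Perm (Fin (m+1)) => z a)
      (t := Finset.univ) (fun z _ => Finset.mem_univ _)]
    simp [Fintype.card_perm]
  rw [Finset.sum_congr rfl (fun b' _ => hconst b')] at hsum
  simp [Finset.sum_const, Nat.factorial_succ] at hsum
  omega

lemma sum_apply_fixed (m : ℕ) (a : Fin (m+1)) (v : Fin (m+1) → ℂ) :
    ∑ z : Equiv.Perm (Fin (m+1)), v (z a) = (m.factorial : ℂ) * ∑ b, v b := by
  rw [← Finset.sum_fiberwise_of_maps_to (g := fun z : Equiv.Perm (Fin (m+1)) => z a)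
    (t := Finset.univ) (fun z _ => Finset.mem_univ _)]
  rw [Finset.mul_sum]
  refine Finset.sum_congr rfl fun b _ => ?_
  have h1 : ∑ z ∈ Finset.univ.filter (fun z : Equiv.Perm (Fin (m+1)) => z a = b), v (z a)
      = ∑ z ∈ Finset.univ.filter (fun z : Equiv.Perm (Fin (m+1)) => z a = b), v b :=
    Finset.sum_congr rfl (fun z hz => by simp only [Finset.mem_filter] at hz; rw [hz.2])
  rw [h1, Finset.sum_const, card_fiber]
  simp [mul_comm]

lemma zero_ne_last {n : ℕ} (hn : 1 ≤ n) : (0 : Fin (n+1)) ≠ Fin.last n := by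
  intro e
  have := congrArg Fin.val e
  simp [Fin.last] at this
  omega

lemma mem_doset_iff {n : ℕ} (hn : 1 ≤ n) (x : Equiv.Perm (Fin (n+1))) :
    x ∈ doset n (Equiv.swap 0 (Fin.last n)) ↔ x (Fin.last n) ≠ Fin.last n := by
  have h0 := zero_ne_last hn
  constructor
  · rintro ⟨h, hh, h', hh', rfl⟩ heq
    rw [mem_Sn_iff] at hh hh'
    rw [Equiv.Perm.mul_apply, Equiv.Perm.mul_apply, hh', Equiv.swap_apply_right] at heq
    rw [← hh] at heq
    exact h0 (h.injective heq)
  · intro hx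
    have hjl : x⁻¹ (Fin.last n) ≠ Fin.last n := by
      intro e
      apply hx
      conv_lhs => rw [← e]
      exact Equiv.apply_symm_apply x _
    refine ⟨x * Equiv.swap 0 (x⁻¹ (Fin.last n)) * Equiv.swap 0 (Fin.last n), ?_,
      (Equiv.swap 0 (x⁻¹ (Fin.last n)))⁻¹, ?_, ?_⟩
    · rw [mem_Sn_iff]
      rw [Equiv.Perm.mul_apply, Equiv.Perm.mul_apply, Equiv.swap_apply_right,
        Equiv.swap_apply_left]
      exact Equiv.apply_symm_apply x _
    · exact (Sn n).inv_mem (by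
        rw [mem_Sn_iff]
        exact Equiv.swap_apply_of_ne_of_ne (Ne.symm h0) (Ne.symm hjl))
    · rw [Equiv.swap_inv]
      simp [mul_assoc, Equiv.swap_mul_self_mul, Equiv.swap_mul_self]

lemma sum_ite_last (m : ℕ) (x y : ℂ) :
    ∑ b : Fin (m+1), (if b = Fin.last m then x else y) = x + m * y := by
  have key : ∀ b : Fin (m+1),
      (if b = Fin.last m then x else y) = y + (if b = Fin.last m then x - y else 0) := by
    intro b; by_cases h : b = Fin.last m <;> simp [h]
  simp_rw [key]
  rw [Finset.sum_add_distrib, Finset.sum_const,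
    Finset.sum_ite_eq' Finset.univ (Fin.last m) (fun _ => x - y)]
  simp [Fintype.card_fin]
  ring

/-- If `φ = α χ₁^# + χ₀^#` satisfies `φ̄ * φ = ⟨φ,φ⟩ φ`, with
`φ̄(x) = conj (φ(x⁻¹))` and `⟨f,g⟩ = (1/(n+1)!) Σ_σ f(σ) g(σ)`, then `α` is real and
`α(α-1)(α+1/n) = 0`, so `α ∈ {0, 1, -1/n}`. -/
theorem stmt16 (n : ℕ) (hn : 1 ≤ n) (α : ℂ)
    (h : conv n (fun x => (starRingEnd ℂ) (phi n α x⁻¹)) (phi n α) =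
      fun x => ((Nat.factorial (n + 1) : ℂ)⁻¹ *
        ∑ σ : Equiv.Perm (Fin (n + 1)), phi n α σ * phi n α σ) * phi n α x) :
    α.im = 0 ∧ α * (α - 1) * (α + 1 / (n : ℂ)) = 0 := by
  have h0 := zero_ne_last hn
  set u : Fin (n+1) → ℂ := fun i => if i = Fin.last n then 1 else α with hu
  have hphi : ∀ x : Equiv.Perm (Fin (n+1)), phi n α x = u (x (Fin.last n)) := by
    intro x
    by_cases hx : x (Fin.last n) = Fin.last n <;>
      simp [phi, chi0, chi1, mem_doset_iff hn, mem_Sn_iff, hx, hu]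
  have hphiinv : ∀ x : Equiv.Perm (Fin (n+1)), phi n α x⁻¹ = phi n α x := by
    intro x
    rw [hphi, hphi]
    by_cases hx : x (Fin.last n) = Fin.last n
    · have : x⁻¹ (Fin.last n) = Fin.last n := by
        conv_lhs => rw [← hx]
        exact Equiv.symm_apply_apply x _
      rw [this, hx]
    · have : x⁻¹ (Fin.last n) ≠ Fin.last n := by
        intro e; apply hx
        conv_lhs => rw [← e]
        exact Equiv.apply_symm_apply x _
      simp [hu, this, hx]
      exact fun e => absurd e this
  have hfac : ((n+1).factorial : ℂ)⁻¹ ≠ 0 :=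
    inv_ne_zero (by exact_mod_cast Nat.factorial_ne_zero (n+1))
  have hfn : ((n).factorial : ℂ) ≠ 0 := by exact_mod_cast Nat.factorial_ne_zero n
  have hnc : (n : ℂ) ≠ 0 := Nat.cast_ne_zero.mpr (by omega)
  -- inner product sum
  have hR : (∑ σ : Equiv.Perm (Fin (n+1)), phi n α σ * phi n α σ)
      = (n.factorial : ℂ) * (1 + n * (α * α)) := by
    simp_rw [hphi]
    rw [sum_apply_fixed n (Fin.last n) (fun b => u b * u b)]
    congr 1
    have : ∀ b : Fin (n+1), u b * u b = if b = Fin.last n then 1 else α * α := by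
      intro b; by_cases hb : b = Fin.last n <;> simp [hu, hb]
    simp_rw [this]
    rw [sum_ite_last]
  -- step 1 : evaluate at 1
  have h1 := congrFun h 1
  simp only [conv, mul_one] at h1
  have hL1 : (∑ y : Equiv.Perm (Fin (n+1)),
      (starRingEnd ℂ) (phi n α y⁻¹) * phi n α y⁻¹)
      = (n.factorial : ℂ) * (1 + n * ((starRingEnd ℂ) α * α)) := by
    simp_rw [hphiinv, hphi]
    rw [sum_apply_fixed n (Fin.last n) (fun b => (starRingEnd ℂ) (u b) * u b)]
    congr 1
    have : ∀ b : Fin (n+1), (starRingEnd ℂ) (u b) * u b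
        = if b = Fin.last n then 1 else (starRingEnd ℂ) α * α := by
      intro b; by_cases hb : b = Fin.last n <;> simp [hu, hb]
    simp_rw [this]
    rw [sum_ite_last]
  rw [hL1, hR] at h1
  have hphi1 : phi n α 1 = 1 := by
    rw [hphi]; simp [hu, Equiv.Perm.one_apply]
  rw [hphi1, mul_one] at h1
  have hkey : (starRingEnd ℂ) α * α = α * α := by
    have h1' := mul_left_cancel₀ hfac h1
    have h1'' := mul_left_cancel₀ hfn h1'
    have h3 : (n:ℂ) * ((starRingEnd ℂ) α * α) = (n:ℂ) * (α * α) := by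
      linear_combination h1''
    exact mul_left_cancel₀ hnc h3
  have him : α.im = 0 := by
    rcases eq_or_ne α 0 with rfl | hα
    · simp
    · have hcj : (starRingEnd ℂ) α = α := mul_right_cancel₀ hα hkey
      exact (Complex.conj_eq_iff_im).mp hcj
  refine ⟨him, ?_⟩
  rcases eq_or_ne α 0 with rfl | hα
  · ring
  have hcj : (starRingEnd ℂ) α = α := mul_right_cancel₀ hα hkey
  -- step 2 : evaluate at τ
  set τ : Equiv.Perm (Fin (n+1)) := Equiv.swap 0 (Fin.last n) with hτ
  have h2 := congrFun h τ
  simp only [conv] at h2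
  have hL2 : (∑ y : Equiv.Perm (Fin (n+1)),
      (starRingEnd ℂ) (phi n α y⁻¹) * phi n α (y⁻¹ * τ))
      = (n.factorial : ℂ) * (α + α * (1 + n * α) - α * α) := by
    have hre : (∑ y : Equiv.Perm (Fin (n+1)),
        (starRingEnd ℂ) (phi n α y⁻¹) * phi n α (y⁻¹ * τ))
        = ∑ z : Equiv.Perm (Fin (n+1)),
          (starRingEnd ℂ) (phi n α z) * phi n α (z * τ) :=
      Equiv.sum_comp (Equiv.inv (Equiv.Perm (Fin (n+1))))
        (fun z => (starRingEnd ℂ) (phi n α z) * phi n α (z * τ))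
    rw [hre]
    have hterm : ∀ z : Equiv.Perm (Fin (n+1)),
        (starRingEnd ℂ) (phi n α z) * phi n α (z * τ) = u (z (Fin.last n)) * u (z 0) := by
      intro z
      rw [hphi, hphi]
      have hτl : (z * τ) (Fin.last n) = z 0 := by
        rw [Equiv.Perm.mul_apply, hτ, Equiv.swap_apply_right]
      rw [hτl]
      congr 1
      by_cases hz : z (Fin.last n) = Fin.last n <;> simp [hu, hz, hcj]
    simp_rw [hterm]
    -- split the sum
    have hP : ∀ z : Equiv.Perm (Fin (n+1)), z (Fin.last n) = Fin.last n → z 0 ≠ Fin.last n := by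
      intro z hz e
      exact h0 (z.injective (e.trans hz.symm))
    rw [← Finset.sum_filter_add_sum_filter_not Finset.univ
      (fun z : Equiv.Perm (Fin (n+1)) => z (Fin.last n) = Fin.last n)
      (fun z => u (z (Fin.last n)) * u (z 0))]
    have hA : ∑ z ∈ Finset.univ.filter
        (fun z : Equiv.Perm (Fin (n+1)) => z (Fin.last n) = Fin.last n),
        u (z (Fin.last n)) * u (z 0) = (n.factorial : ℂ) * α := by
      have step : ∀ z ∈ Finset.univ.filter
          (fun z : Equiv.Perm (Fin (n+1)) => z (Fin.last n) = Fin.last n),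
          u (z (Fin.last n)) * u (z 0) = α := by
        intro z hz
        simp only [Finset.mem_filter] at hz
        have h1 := hz.2
        have h2 := hP z h1
        simp [hu, h1, h2]
      rw [Finset.sum_congr rfl step, Finset.sum_const, card_fiber]
      simp [mul_comm]
    have hB : ∑ z ∈ Finset.univ.filter
        (fun z : Equiv.Perm (Fin (n+1)) => ¬ z (Fin.last n) = Fin.last n),
        u (z (Fin.last n)) * u (z 0)
        = α * ((n.factorial : ℂ) * (1 + n * α)) - (n.factorial : ℂ) * (α * α) := by
      have hBt : ∀ z ∈ Finset.univ.filter
          (fun z : Equiv.Perm (Fin (n+1)) => ¬ z (Fin.last n) = Fin.last n),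
          u (z (Fin.last n)) * u (z 0) = α * u (z 0) := by
        intro z hz
        simp only [Finset.mem_filter] at hz
        simp [hu, hz.2]
      rw [Finset.sum_congr rfl hBt]
      have htot : ∑ z : Equiv.Perm (Fin (n+1)), α * u (z 0)
          = α * ((n.factorial : ℂ) * (1 + n * α)) := by
        rw [← Finset.mul_sum, sum_apply_fixed n 0 u]
        congr 2
        have : ∀ b : Fin (n+1), u b = if b = Fin.last n then 1 else α := fun b => rfl
        rw [sum_ite_last]
      have hAp : ∑ z ∈ Finset.univ.filter
          (fun z : Equiv.Perm (Fin (n+1)) => z (Fin.last n) = Fin.last n),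
          α * u (z 0) = (n.factorial : ℂ) * (α * α) := by
        have step : ∀ z ∈ Finset.univ.filter
            (fun z : Equiv.Perm (Fin (n+1)) => z (Fin.last n) = Fin.last n),
            α * u (z 0) = α * α := by
          intro z hz
          simp only [Finset.mem_filter] at hz
          have := hP z hz.2
          simp [hu, this]
        rw [Finset.sum_congr rfl step, Finset.sum_const, card_fiber]
        simp [mul_comm]
      have := Finset.sum_filter_add_sum_filter_not Finset.univ
        (fun z : Equiv.Perm (Fin (n+1)) => z (Fin.last n) = Fin.last n)
        (fun z => α * u (z 0))
      rw [hAp, htot] at this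
      linear_combination this
    rw [hA, hB]
    ring
  have hphiτ : phi n α τ = α := by
    rw [hphi]
    have hτl : τ (Fin.last n) = 0 := Equiv.swap_apply_right _ _
    rw [hτl]
    exact if_neg h0
  rw [hL2, hR, hphiτ] at h2
  have h2' : ((n+1).factorial : ℂ)⁻¹ * ((n.factorial : ℂ) * (α + α*(1+n*α) - α*α))
      = ((n+1).factorial : ℂ)⁻¹ * ((n.factorial : ℂ) * ((1 + n*(α*α))*α)) := by
    linear_combination h2
  have hE : α + α*(1+(n:ℂ)*α) - α*α = (1 + (n:ℂ)*(α*α))*α :=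
    mul_left_cancel₀ hfn (mul_left_cancel₀ hfac h2')
  field_simp
  linear_combination -hE
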